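/- Consider the three partial maps φ₁ : [0,1/2] → [0,3/4], φ₁(x) = A⁻¹(x); φ₂ : [1/2,3/4] → [1/2,7/8], φ₂(x) = B⁻¹(x); φ₃ : [3/4,1] → [1/2,1], φ₃(x) = A(x). A word over Φ = (φ₁, φ₂, φ₃) is a finite nonempty sequence of letters φ_{i_1}^{ε_1}, ..., φ_{i_k}^{ε_k} with i_j ∈ {1,2,3} and ε_j ∈ {−1, +1}; it is reduced if whenever i_j = i_{j+1} then ε_j = ε_{j+1} (no letter is immediately followed by its inverse). For a point x ∈ [0,1], say ω fixes x if, applying the letters of ω successively from the right (each application requiring the current point to lie in the domain of the corresponding partial map φ_{i}^{ε}), all applications are defined and the final value equals x. Then for every reduced word ω over Φ, the set { x ∈ [0,1] : ω fixes x } has Lebesgue measure zero. -/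

import Mathlib

open scoped Classical

/-- The standard generator `A` of Thompson's group `F`. -/
noncomputable def Afun (x : ℝ) : ℝ :=
  if x ≤ 1 / 2 then x / 2 else if x ≤ 3 / 4 then x - 1 / 4 else 2 * x - 1

/-- The inverse of `Afun`. -/
noncomputable def AinvFun (y : ℝ) : ℝ :=
  if y ≤ 1 / 4 then 2 * y else if y ≤ 1 / 2 then y + 1 / 4 else (y + 1) / 2

/-- The standard generator `B` of Thompson's group `F`. -/
noncomputable def Bfun (x : ℝ) : ℝ :=
  if x ≤ 1 / 2 then x
  else if x ≤ 3 / 4 then x / 2 + 1 / 4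
  else if x ≤ 7 / 8 then x - 1 / 8
  else 2 * x - 1

/-- The inverse of `Bfun`. -/
noncomputable def BinvFun (y : ℝ) : ℝ :=
  if y ≤ 1 / 2 then y
  else if y ≤ 5 / 8 then 2 * y - 1 / 2
  else if y ≤ 3 / 4 then y + 1 / 8
  else (y + 1) / 2

/-- The domain of the letter `φ_i^ε` of the graphing `Φ = (φ₁, φ₂, φ₃)`:
`φ₁ = A⁻¹ : [0,1/2] → [0,3/4]`, `φ₂ = B⁻¹ : [1/2,3/4] → [1/2,7/8]`,
`φ₃ = A : [3/4,1] → [1/2,1]` (`true` is the letter itself, `false` its inverse,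
whose domain is the range of the letter). -/
def letterDom : Fin 3 → Bool → Set ℝ
  | 0, true => Set.Icc 0 (1 / 2)
  | 0, false => Set.Icc 0 (3 / 4)
  | 1, true => Set.Icc (1 / 2) (3 / 4)
  | 1, false => Set.Icc (1 / 2) (7 / 8)
  | 2, true => Set.Icc (3 / 4) 1
  | 2, false => Set.Icc (1 / 2) 1

/-- The map effected by the letter `φ_i^ε`. -/
noncomputable def letterFun : Fin 3 → Bool → ℝ → ℝ
  | 0, true => AinvFun
  | 0, false => Afun
  | 1, true => BinvFun
  | 1, false => Bfun
  | 2, true => Afun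
  | 2, false => AinvFun

/-- Successive (right-to-left) application of a word over `Φ` to a point: the list is in
order of application (the rightmost letter of the word comes first); the result is `none`
if at some stage the current point leaves the domain of the next letter. -/
noncomputable def applyWord : List (Fin 3 × Bool) → ℝ → Option ℝ
  | [], x => some x
  | l :: ls, x =>
      if x ∈ letterDom l.1 l.2 then applyWord ls (letterFun l.1 l.2 x) else none

/-- A word over `Φ` is reduced if no letter is immediately followed by its inverse. -/
def ReducedWord (w : List (Fin 3 × Bool)) : Prop :=
  List.Chain' (fun l₁ l₂ => l₁.1 = l₂.1 → l₁.2 = l₂.2) w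

def Good (x : ℝ) : Prop := Irrational x ∧ 0 < x ∧ x < 1

noncomputable def out (x : ℝ) : ℝ :=
  if x < 1/2 then AinvFun x else if x < 3/4 then BinvFun x else Afun x

noncomputable def reg (x : ℝ) : Fin 3 :=
  if x < 1/2 then 0 else if x < 3/4 then 1 else 2

noncomputable def pval (x : ℝ) : ℕ :=
  if 1/4 < x ∧ x < 1/2 then 2 else if 5/8 < x ∧ x < 3/4 then 1 else 0

lemma irr_ne_q {x : ℝ} (h : Irrational x) (q : ℚ) : x ≠ (q:ℝ) :=
  fun hx => h ⟨q, hx.symm⟩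

lemma irr_affine' {x y : ℝ} (h : Irrational x) (a b : ℚ) (ha : a ≠ 0)
    (hy : y = (a:ℝ) * x + b) : Irrational y := by
  rintro ⟨q, hq⟩
  apply h
  refine ⟨(q - b) / a, ?_⟩
  have ha' : (a:ℝ) ≠ 0 := by exact_mod_cast ha
  push_cast
  field_simp
  linarith [hq, hy]

/-- The five-branch description of `out` on good points. -/
lemma out_branches {x : ℝ} (h : Good x) :
    (0 < x ∧ x < 1/4 ∧ out x = 2*x) ∨ (1/4 < x ∧ x < 1/2 ∧ out x = x + 1/4) ∨
    (1/2 < x ∧ x < 5/8 ∧ out x = 2*x - 1/2) ∨ (5/8 < x ∧ x < 3/4 ∧ out x = x + 1/8) ∨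
    (3/4 < x ∧ x < 1 ∧ out x = 2*x - 1) := by
  obtain ⟨hirr, h0, h1⟩ := h
  have e14 : x ≠ 1/4 := by have h := irr_ne_q hirr (1/4); push_cast at h; exact h
  have e12 : x ≠ 1/2 := by have h := irr_ne_q hirr (1/2); push_cast at h; exact h
  have e58 : x ≠ 5/8 := by have h := irr_ne_q hirr (5/8); push_cast at h; exact h
  have e34 : x ≠ 3/4 := by have h := irr_ne_q hirr (3/4); push_cast at h; exact h
  rcases lt_or_gt_of_ne e12 with h12 | h12
  · rcases lt_or_gt_of_ne e14 with h14 | h14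
    · refine Or.inl ⟨h0, h14, ?_⟩
      simp only [out, AinvFun]
      rw [if_pos h12, if_pos (le_of_lt h14)]
    · refine Or.inr (Or.inl ⟨h14, h12, ?_⟩)
      simp only [out, AinvFun]
      rw [if_pos h12, if_neg (by linarith), if_pos (le_of_lt h12)]
  · rcases lt_or_gt_of_ne e34 with h34 | h34
    · rcases lt_or_gt_of_ne e58 with h58 | h58
      · refine Or.inr (Or.inr (Or.inl ⟨h12, h58, ?_⟩))
        simp only [out, BinvFun]
        rw [if_neg (by linarith), if_pos h34, if_neg (by linarith), if_pos (le_of_lt h58)]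
      · refine Or.inr (Or.inr (Or.inr (Or.inl ⟨h58, h34, ?_⟩)))
        simp only [out, BinvFun]
        rw [if_neg (by linarith), if_pos h34, if_neg (by linarith), if_neg (by linarith),
          if_pos (le_of_lt h34)]
    · refine Or.inr (Or.inr (Or.inr (Or.inr ⟨h34, h1, ?_⟩)))
      simp only [out, Afun]
      rw [if_neg (by linarith), if_neg (by linarith), if_neg (by linarith),
        if_neg (by linarith)]

lemma good_out {x : ℝ} (h : Good x) : Good (out x) := by
  have hirr := h.1
  rcases out_branches h with ⟨ha, hb, hc⟩ | ⟨ha, hb, hc⟩ | ⟨ha, hb, hc⟩ | ⟨ha, hb, hc⟩ |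
    ⟨ha, hb, hc⟩ <;> rw [hc]
  · exact ⟨irr_affine' hirr 2 0 (by norm_num) (by push_cast; ring),
      by constructor <;> linarith⟩
  · exact ⟨irr_affine' hirr 1 (1/4) (by norm_num) (by push_cast; ring),
      by constructor <;> linarith⟩
  · exact ⟨irr_affine' hirr 2 (-(1/2)) (by norm_num) (by push_cast; ring),
      by constructor <;> linarith⟩
  · exact ⟨irr_affine' hirr 1 (1/8) (by norm_num) (by push_cast; ring),
      by constructor <;> linarith⟩
  · exact ⟨irr_affine' hirr 2 (-1) (by norm_num) (by push_cast; ring),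
      by constructor <;> linarith⟩

lemma pval_le_one {x : ℝ} (hx : 1/2 < x) : pval x ≤ 1 := by
  simp only [pval]
  rw [if_neg (by push_neg; intro h; linarith)]
  split_ifs <;> norm_num

lemma out_step {x : ℝ} (h : Good x) :
    (∃ q : ℚ, out x = 2*x + (q:ℝ)) ∨
    (∃ q : ℚ, out x = x + (q:ℝ) ∧ pval (out x) < pval x) := by
  rcases out_branches h with ⟨ha, hb, hc⟩ | ⟨ha, hb, hc⟩ | ⟨ha, hb, hc⟩ | ⟨ha, hb, hc⟩ |
    ⟨ha, hb, hc⟩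
  · exact Or.inl ⟨0, by rw [hc]; norm_num⟩
  · refine Or.inr ⟨1/4, by rw [hc]; norm_num, ?_⟩
    have h2 : pval x = 2 := by simp only [pval]; rw [if_pos ⟨ha, hb⟩]
    have : pval (out x) ≤ 1 := pval_le_one (by rw [hc]; linarith)
    omega
  · exact Or.inl ⟨-(1/2), by rw [hc]; push_cast; ring⟩
  · refine Or.inr ⟨1/8, by rw [hc]; norm_num, ?_⟩
    have h2 : pval x = 1 := by
      simp only [pval]
      rw [if_neg (by push_neg; intro h; linarith), if_pos ⟨ha, hb⟩]
    have h3 : pval (out x) = 0 := by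
      simp only [pval]
      rw [if_neg (by push_neg; intro h; rw [hc] at h; linarith),
        if_neg (by push_neg; intro h; rw [hc] at h; linarith)]
    omega
  · exact Or.inl ⟨-1, by rw [hc]; push_cast; ring⟩

lemma good_iter {x : ℝ} (h : Good x) (m : ℕ) : Good (out^[m] x) := by
  induction m with
  | zero => simpa using h
  | succ n ih => rw [Function.iterate_succ_apply']; exact good_out ih

lemma iter_form {x : ℝ} (h : Good x) (m : ℕ) :
    ∃ (M : ℕ) (Q : ℚ), out^[m] x = 2^M * x + (Q:ℝ) ∧
      (M = 0 → pval (out^[m] x) + m ≤ pval x) := by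
  induction m with
  | zero => exact ⟨0, 0, by norm_num, by norm_num⟩
  | succ n ih =>
    obtain ⟨M, Q, h1, h2⟩ := ih
    have hy : Good (out^[n] x) := good_iter h n
    rcases out_step hy with ⟨q, hq⟩ | ⟨q, hq, hp⟩
    · refine ⟨M + 1, 2*Q + q, ?_, by omega⟩
      rw [Function.iterate_succ_apply', hq, h1]
      push_cast; ring
    · refine ⟨M, Q + q, ?_, ?_⟩
      · rw [Function.iterate_succ_apply', hq, h1]; push_cast; ring
      · intro hM
        have := h2 hM
        rw [Function.iterate_succ_apply']
        omega

lemma no_periodic {x : ℝ} (h : Good x) {m : ℕ} (hm : 1 ≤ m) : out^[m] x ≠ x := by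
  intro hfix
  obtain ⟨M, Q, h1, h2⟩ := iter_form h m
  rcases Nat.eq_zero_or_pos M with hM | hM
  · have := h2 hM
    rw [hfix] at this
    omega
  · rw [hfix] at h1
    have h2M : (1:ℝ) < 2^M := by
      have : (1:ℝ) < 2 := one_lt_two
      calc (1:ℝ) < 2^1 := by norm_num
        _ ≤ 2^M := pow_le_pow_right₀ (by norm_num) hM
    have hQne : ((2:ℚ)^M - 1) ≠ 0 := by
      have : (1:ℚ) < 2^M := by
        calc (1:ℚ) < 2^1 := by norm_num
          _ ≤ 2^M := pow_le_pow_right₀ (by norm_num) hM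
      linarith
    apply h.1
    refine ⟨-Q / (2^M - 1), ?_⟩
    have hQR : ((2:ℝ)^M - 1) ≠ 0 := by linarith
    push_cast
    rw [div_eq_iff hQR]
    linarith [h1]

lemma irr_lt {x : ℝ} (h : Irrational x) (q : ℚ) {c : ℝ} (hq : (q:ℝ) = c) (hle : x ≤ c) :
    x < c := lt_of_le_of_ne hle (fun hx => h ⟨q, by rw [hq, hx]⟩)

lemma irr_gt {x : ℝ} (h : Irrational x) (q : ℚ) {c : ℝ} (hq : (q:ℝ) = c) (hle : c ≤ x) :
    c < x := lt_of_le_of_ne hle (fun hx => h ⟨q, by rw [hq, ← hx]⟩)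

lemma down_letter {x : ℝ} (h : Good x) {i : Fin 3} (hd : x ∈ letterDom i true) :
    i = reg x ∧ letterFun i true x = out x := by
  fin_cases i
  · obtain ⟨hd1, hd2⟩ : x ∈ Set.Icc (0:ℝ) (1/2) := hd
    have h12 : x < 1/2 := irr_lt h.1 (1/2) (by norm_num) hd2
    constructor
    · simp only [reg]; rw [if_pos h12]; rfl
    · show AinvFun x = out x
      simp only [out]; rw [if_pos h12]
  · obtain ⟨hd1, hd2⟩ : x ∈ Set.Icc (1/2:ℝ) (3/4) := hd
    have h12 : 1/2 < x := irr_gt h.1 (1/2) (by norm_num) hd1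
    have h34 : x < 3/4 := irr_lt h.1 (3/4) (by norm_num) hd2
    constructor
    · simp only [reg]; rw [if_neg (by linarith), if_pos h34]; rfl
    · show BinvFun x = out x
      simp only [out]; rw [if_neg (by linarith), if_pos h34]
  · obtain ⟨hd1, hd2⟩ : x ∈ Set.Icc (3/4:ℝ) 1 := hd
    have h34 : 3/4 < x := irr_gt h.1 (3/4) (by norm_num) hd1
    constructor
    · simp only [reg]; rw [if_neg (by linarith), if_neg (by linarith)]; rfl
    · show Afun x = out x
      simp only [out]; rw [if_neg (by linarith), if_neg (by linarith)]

lemma up_letter {x : ℝ} (h : Good x) {i : Fin 3} (hd : x ∈ letterDom i false) :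
    Good (letterFun i false x) ∧ out (letterFun i false x) = x ∧
      reg (letterFun i false x) = i := by
  obtain ⟨hirr, hx0, hx1⟩ := h
  fin_cases i
  · obtain ⟨hd1, hd2⟩ : x ∈ Set.Icc (0:ℝ) (3/4) := hd
    have h34 : x < 3/4 := irr_lt hirr (3/4) (by norm_num) hd2
    have e12 : x ≠ 1/2 := by have h := irr_ne_q hirr (1/2); push_cast at h; exact h
    show Good (Afun x) ∧ out (Afun x) = x ∧ reg (Afun x) = 0
    rcases lt_or_gt_of_ne e12 with h12 | h12
    · have hA : Afun x = x / 2 := by simp only [Afun]; rw [if_pos (by linarith)]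
      rw [hA]
      refine ⟨⟨irr_affine' hirr (1/2) 0 (by norm_num) (by push_cast; ring),
        by linarith, by linarith⟩, ?_, ?_⟩
      · simp only [out, AinvFun]
        rw [if_pos (by linarith), if_pos (by linarith)]; ring
      · simp only [reg]; rw [if_pos (by linarith)]
    · have hA : Afun x = x - 1/4 := by
        simp only [Afun]; rw [if_neg (by linarith), if_pos (by linarith)]
      rw [hA]
      refine ⟨⟨irr_affine' hirr 1 (-(1/4)) (by norm_num) (by push_cast; ring),
        by linarith, by linarith⟩, ?_, ?_⟩
      · simp only [out, AinvFun]
        rw [if_pos (by linarith), if_neg (by linarith), if_pos (by linarith)]; ring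
      · simp only [reg]; rw [if_pos (by linarith)]
  · obtain ⟨hd1, hd2⟩ : x ∈ Set.Icc (1/2:ℝ) (7/8) := hd
    have h12 : 1/2 < x := irr_gt hirr (1/2) (by norm_num) hd1
    have h78 : x < 7/8 := irr_lt hirr (7/8) (by norm_num) hd2
    have e34 : x ≠ 3/4 := by have h := irr_ne_q hirr (3/4); push_cast at h; exact h
    show Good (Bfun x) ∧ out (Bfun x) = x ∧ reg (Bfun x) = 1
    rcases lt_or_gt_of_ne e34 with h34 | h34
    · have hB : Bfun x = x / 2 + 1/4 := by
        simp only [Bfun]; rw [if_neg (by linarith), if_pos (by linarith)]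
      rw [hB]
      refine ⟨⟨irr_affine' hirr (1/2) (1/4) (by norm_num) (by push_cast; ring),
        by linarith, by linarith⟩, ?_, ?_⟩
      · simp only [out, BinvFun]
        rw [if_neg (by linarith), if_pos (by linarith), if_neg (by linarith),
          if_pos (by linarith)]
        ring
      · simp only [reg]; rw [if_neg (by linarith), if_pos (by linarith)]
    · have hB : Bfun x = x - 1/8 := by
        simp only [Bfun]
        rw [if_neg (by linarith), if_neg (by linarith), if_pos (by linarith)]
      rw [hB]
      refine ⟨⟨irr_affine' hirr 1 (-(1/8)) (by norm_num) (by push_cast; ring),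
        by linarith, by linarith⟩, ?_, ?_⟩
      · simp only [out, BinvFun]
        rw [if_neg (by linarith), if_pos (by linarith), if_neg (by linarith),
          if_neg (by linarith), if_pos (by linarith)]
        ring
      · simp only [reg]; rw [if_neg (by linarith), if_pos (by linarith)]
  · obtain ⟨hd1, hd2⟩ : x ∈ Set.Icc (1/2:ℝ) 1 := hd
    have h12 : 1/2 < x := irr_gt hirr (1/2) (by norm_num) hd1
    show Good (AinvFun x) ∧ out (AinvFun x) = x ∧ reg (AinvFun x) = 2
    have hA : AinvFun x = (x + 1) / 2 := by
      simp only [AinvFun]; rw [if_neg (by linarith), if_neg (by linarith)]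
    rw [hA]
    refine ⟨⟨irr_affine' hirr (1/2) (1/2) (by norm_num) (by push_cast; ring),
      by linarith, by linarith⟩, ?_, ?_⟩
    · simp only [out, Afun]
      rw [if_neg (by linarith), if_neg (by linarith), if_neg (by linarith),
        if_neg (by linarith)]
      ring
    · simp only [reg]; rw [if_neg (by linarith), if_neg (by linarith)]



lemma applyWord_append (u v : List (Fin 3 × Bool)) (x : ℝ) :
    applyWord (u ++ v) x = (applyWord u x).bind (applyWord v) := by
  induction u generalizing x with
  | nil => simp [applyWord]
  | cons l ls ih =>
    simp only [List.cons_append, applyWord]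
    split_ifs with h
    · exact ih _
    · simp

lemma lemF : ∀ (w : List (Fin 3 × Bool)) (x y : ℝ), (∀ l ∈ w, l.2 = true) → Good x →
    applyWord w x = some y → Good y ∧ y = out^[w.length] x := by
  intro w
  induction w with
  | nil =>
    intro x y _ hx h
    simp only [applyWord, Option.some.injEq] at h
    exact ⟨h ▸ hx, by simp [← h]⟩
  | cons l ls ih =>
    intro x y hall hx h
    simp only [applyWord] at h
    split_ifs at h with hdom
    · have hl : l.2 = true := hall l List.mem_cons_self
      rw [hl] at hdom h
      obtain ⟨hi, he⟩ := down_letter hx hdom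
      rw [he] at h
      obtain ⟨hg, hy⟩ := ih (out x) y (fun l' hl' => hall l' (List.mem_cons_of_mem _ hl'))
        (good_out hx) h
      exact ⟨hg, by rw [hy, List.length_cons, Function.iterate_succ_apply]⟩

lemma lemG : ∀ (w : List (Fin 3 × Bool)) (x y : ℝ), (∀ l ∈ w, l.2 = false) → Good x →
    applyWord w x = some y → Good y ∧ out^[w.length] y = x := by
  intro w
  induction w with
  | nil =>
    intro x y _ hx h
    simp only [applyWord, Option.some.injEq] at h
    exact ⟨h ▸ hx, by simp [← h]⟩
  | cons l ls ih =>
    intro x y hall hx h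
    simp only [applyWord] at h
    split_ifs at h with hdom
    · have hl : l.2 = false := hall l List.mem_cons_self
      rw [hl] at hdom h
      obtain ⟨hg₁, hout₁, _⟩ := up_letter hx hdom
      obtain ⟨hg, hy⟩ := ih _ y (fun l' hl' => hall l' (List.mem_cons_of_mem _ hl')) hg₁ h
      refine ⟨hg, ?_⟩
      rw [List.length_cons, Function.iterate_succ_apply', hy, hout₁]

lemma lemH' : ∀ (w : List (Fin 3 × Bool)) (i : Fin 3) (x y : ℝ),
    ReducedWord ((i, false) :: w) → Good x → reg x = i → applyWord w x = some y →
    ∀ l ∈ w, l.2 = false := by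
  intro w
  induction w with
  | nil => intro _ _ _ _ _ _ _ l hl; exact absurd hl List.not_mem_nil
  | cons l ls ih =>
    intro i x y hred hx hreg h
    obtain ⟨hrel, hchain⟩ := List.isChain_cons_cons.mp hred
    simp only [applyWord] at h
    split_ifs at h with hdom
    · cases hl2 : l.2 with
      | true =>
        rw [hl2] at hdom
        obtain ⟨hi, _⟩ := down_letter hx hdom
        have : (false : Bool) = l.2 := hrel (by rw [hi, hreg])
        rw [hl2] at this
        exact absurd this (by simp)
      | false =>
        rw [hl2] at hdom h
        obtain ⟨hg₁, _, hreg₁⟩ := up_letter hx hdom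
        have hl_eq : l = (l.1, false) := Prod.ext rfl hl2
        have hchain' : ReducedWord ((l.1, false) :: ls) := by rw [← hl_eq]; exact hchain
        have hrest := ih l.1 _ y hchain' hg₁ hreg₁ h
        intro l' hl'
        rcases List.mem_cons.mp hl' with rfl | hl'
        · exact hl2
        · exact hrest l' hl'

lemma dropWhile_head_not {α : Type*} (p : α → Bool) :
    ∀ (w : List α) (l : α) (r : List α), w.dropWhile p = l :: r → p l = false := by
  intro w
  induction w with
  | nil => intro l r h; simp [List.dropWhile] at h
  | cons a as ih =>
    intro l r h
    by_cases hpa : p a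
    · rw [List.dropWhile_cons_of_pos hpa] at h; exact ih l r h
    · rw [List.dropWhile_cons_of_neg hpa] at h
      injection h with h1 h2
      subst h1
      simpa using hpa

lemma noFix (w : List (Fin 3 × Bool)) (hred : ReducedWord w) (hne : w ≠ []) (x : ℝ)
    (hx : Good x) : applyWord w x ≠ some x := by
  intro hfix
  set p : Fin 3 × Bool → Bool := fun l => l.2 with hp
  have hsplit : w.takeWhile p ++ w.dropWhile p = w := List.takeWhile_append_dropWhile
  have h1 : ∀ l ∈ w.takeWhile p, l.2 = true := fun l hl => List.mem_takeWhile_imp hl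
  rw [← hsplit, applyWord_append] at hfix
  obtain ⟨z, hz1, hz2⟩ := Option.bind_eq_some_iff.mp hfix
  obtain ⟨hzg, hzf⟩ := lemF _ x z h1 hx hz1
  cases hw2 : w.dropWhile p with
  | nil =>
    rw [hw2] at hz2
    simp only [applyWord, Option.some.injEq] at hz2
    have hw1 : w.takeWhile p = w := by rw [hw2, List.append_nil] at hsplit; exact hsplit
    have hlen : 1 ≤ (w.takeWhile p).length := by
      rw [hw1]
      exact List.length_pos_iff.mpr hne
    exact no_periodic hx hlen (by rw [← hzf, hz2])
  | cons l₂ rest =>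
    have hl₂ : l₂.2 = false := by
      have := dropWhile_head_not p w l₂ rest hw2
      simpa using this
    rw [hw2] at hz2
    have hz2' := hz2
    simp only [applyWord] at hz2
    split_ifs at hz2 with hdom
    rw [hl₂] at hdom hz2
    obtain ⟨hg₁, hout₁, hreg₁⟩ := up_letter hzg hdom
    have hchain₂ : ReducedWord (l₂ :: rest) := by
      rw [← hw2]
      exact hred.suffix ⟨w.takeWhile p, hsplit⟩
    have hrest : ∀ l ∈ rest, l.2 = false := by
      have hl₂' : l₂ = (l₂.1, false) := by rw [← hl₂]
      have hchain₂' : ReducedWord ((l₂.1, false) :: rest) := by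
        rw [← hl₂']
        exact hchain₂
      exact lemH' rest l₂.1 _ x hchain₂' hg₁ hreg₁ hz2
    have hall₂ : ∀ l ∈ l₂ :: rest, l.2 = false := by
      intro l hl
      rcases List.mem_cons.mp hl with rfl | hl
      · exact hl₂
      · exact hrest l hl
    obtain ⟨_, hG⟩ := lemG _ z x hall₂ hzg hz2'
    set a := (w.takeWhile p).length with ha
    have hb : (l₂ :: rest).length = rest.length + 1 := List.length_cons
    have hab : out^[rest.length + 1] x = out^[a] x := by
      rw [← hb, hG, hzf]
    rcases Nat.lt_trichotomy a (rest.length + 1) with hlt | heq | hgt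
    · have h2 : out^[(rest.length + 1 - a) + a] x = out^[a] x := by
        rw [Nat.sub_add_cancel hlt.le, hab]
      rw [Function.iterate_add_apply] at h2
      exact no_periodic (good_iter hx a) (by omega) h2
    · -- a = rest.length + 1 ≥ 1 : junction argument
      have ha1 : 1 ≤ a := by omega
      have hw1ne : w.takeWhile p ≠ [] := by
        intro hnil; rw [hnil] at ha; simp at ha; omega
      obtain ⟨w₁', lt', hw1⟩ := (w.takeWhile p).eq_nil_or_concat.resolve_left hw1ne
      rw [List.concat_eq_append] at hw1
      rw [hw1, applyWord_append] at hz1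
      obtain ⟨z', hz1', hz1''⟩ := Option.bind_eq_some_iff.mp hz1
      obtain ⟨hz'g, hz'f⟩ := lemF w₁' x z'
        (fun l hl => h1 l (by rw [hw1]; exact List.mem_append_left _ hl)) hx hz1'
      have hlt2 : lt'.2 = true := h1 lt' (by rw [hw1]; simp)
      simp only [applyWord] at hz1''
      split_ifs at hz1'' with hdom'
      rw [hlt2] at hdom'
      obtain ⟨hi', _⟩ := down_letter hz'g hdom'
      -- lemG on rest
      obtain ⟨_, hGr⟩ := lemG rest _ x hrest hg₁ hz2
      -- lengths : w₁'.length = a - 1 = rest.length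
      have hlen' : w₁'.length = rest.length := by
        have : a = w₁'.length + 1 := by rw [ha, hw1]; simp
        omega
      have hyz : letterFun l₂.1 false z = z' := by
        rw [← hGr, hz'f, hlen']
      have hii : lt'.1 = l₂.1 := by
        rw [hi', ← hyz, hreg₁]
      have hsuf : ReducedWord (lt' :: l₂ :: rest) := by
        refine hred.suffix ⟨w₁', ?_⟩
        rw [← hsplit, hw1, hw2]
        simp
      have hrel := (List.isChain_cons_cons.mp hsuf).1
      have := hrel hii
      rw [hlt2, hl₂] at this
      exact absurd this (by simp)
    · have h2 : out^[(a - (rest.length + 1)) + (rest.length + 1)] x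
          = out^[rest.length + 1] x := by
        rw [Nat.sub_add_cancel hgt.le, hab]
      rw [Function.iterate_add_apply] at h2
      exact no_periodic (good_iter hx (rest.length + 1)) (by omega) h2


/-- For every nonempty reduced word `ω` over the graphing
`Φ = (φ₁, φ₂, φ₃)`, the set of points `x ∈ [0,1]` fixed by `ω` (all successive
applications being defined and the final value equal to `x`) has Lebesgue measure
zero. -/
theorem statement17 (w : List (Fin 3 × Bool)) (hne : w ≠ []) (hred : ReducedWord w) :
    MeasureTheory.volume
      { x : ℝ | x ∈ Set.Icc (0 : ℝ) 1 ∧ applyWord w x = some x } = 0 := by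
  have hsub : {x : ℝ | x ∈ Set.Icc (0:ℝ) 1 ∧ applyWord w x = some x} ⊆
      Set.range ((↑) : ℚ → ℝ) := by
    rintro x ⟨hxI, hfix⟩
    by_contra hq
    have hirr : Irrational x := hq
    have h0 : 0 < x := lt_of_le_of_ne hxI.1
      (Ne.symm (by have := irr_ne_q hirr 0; push_cast at this; exact this))
    have h1 : x < 1 := lt_of_le_of_ne hxI.2
      (by have := irr_ne_q hirr 1; push_cast at this; exact this)
    exact noFix w hred hne x ⟨hirr, h0, h1⟩ hfix
  exact MeasureTheory.measure_mono_null hsub ((Set.countable_range _).measure_zero _)
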